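/- For the 6-dimensional Lotka-Volterra system with antisymmetric matrix A having upper entries A_{12}=a₁, A_{1j}=A_{2j}=b₁ for j=3,4,5, A_{16}=A_{26}=c₁, A_{34}=a₂, A_{35}=a₃, A_{45}=a₄, A_{36}=A_{46}=A_{56}=a₅, the two functions F₁ = (x₁+x₂)^{a₅}(x₃+x₄+x₅)^{-c₁} x₆^{b₁} and F₂ = x₃^{-a₄} x₄^{a₃} x₅^{-a₂}(x₃+x₄+x₅)^{a₂-a₃+a₄} are both constants of motion of ẋ_i = x_i(Ax)_i and they Poisson commute: {F₁,F₂} = 0 with respect to the bracket {x_i,x_j} = A_{ij}x_ix_j. -/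

import Mathlib

set_option maxHeartbeats 2000000


open Real Finset

/-- i-th component of the gradient of `F` at `x`. -/
noncomputable def grad {n : ℕ} (F : (Fin n → ℝ) → ℝ) (x : Fin n → ℝ) (i : Fin n) : ℝ :=
  fderiv ℝ F x (Pi.single i 1)

/-- Lie derivative (directional derivative) of `F` along the vector field `f` at `x`. -/
noncomputable def lieDeriv {n : ℕ} (F : (Fin n → ℝ) → ℝ) (f : (Fin n → ℝ) → Fin n → ℝ)
    (x : Fin n → ℝ) : ℝ := ∑ i, grad F x i * f x i

/-- The Poisson bracket {F,G}(x) = Σ_{i,j} A_{ij} x_i x_j ∂_iF ∂_jG. -/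
noncomputable def pbracket {n : ℕ} (A : Matrix (Fin n) (Fin n) ℝ)
    (F G : (Fin n → ℝ) → ℝ) (x : Fin n → ℝ) : ℝ :=
  ∑ i, ∑ j, A i j * x i * x j * grad F x i * grad G x j

/-- The (possibly inhomogeneous) Lotka-Volterra vector field
`f_i(x) = x_i (r_i + Σ_j A_{ij} x_j)`. -/
def lvField {n : ℕ} (A : Matrix (Fin n) (Fin n) ℝ) (r : Fin n → ℝ)
    (x : Fin n → ℝ) (i : Fin n) : ℝ := x i * (r i + ∑ j, A i j * x j)

noncomputable def pr (i : Fin 6) : (Fin 6 → ℝ) →L[ℝ] ℝ := ContinuousLinearMap.proj i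

lemma grad_F1 (p q r : ℝ) (x : Fin 6 → ℝ) (h01 : x 0 + x 1 ≠ 0)
    (h234 : x 2 + x 3 + x 4 ≠ 0) (h5 : x 5 ≠ 0) :
    ∀ i, grad (fun x : Fin 6 → ℝ => (x 0 + x 1) ^ p * (x 2 + x 3 + x 4) ^ q * x 5 ^ r) x i =
      (if i = 0 ∨ i = 1 then p * (x 0 + x 1) ^ (p - 1) * (x 2 + x 3 + x 4) ^ q * x 5 ^ r else 0)
      + (if i = 2 ∨ i = 3 ∨ i = 4 then
          q * (x 0 + x 1) ^ p * (x 2 + x 3 + x 4) ^ (q - 1) * x 5 ^ r else 0)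
      + (if i = 5 then r * (x 0 + x 1) ^ p * (x 2 + x 3 + x 4) ^ q * x 5 ^ (r - 1) else 0) := by
  have hA : HasFDerivAt (fun x : Fin 6 → ℝ => (x 0 + x 1) ^ p)
      ((p * (x 0 + x 1) ^ (p - 1)) • (pr 0 + pr 1)) x :=
    ((pr 0).hasFDerivAt.add (pr 1).hasFDerivAt).rpow_const (Or.inl h01)
  have hB : HasFDerivAt (fun x : Fin 6 → ℝ => (x 2 + x 3 + x 4) ^ q)
      ((q * (x 2 + x 3 + x 4) ^ (q - 1)) • (pr 2 + pr 3 + pr 4)) x :=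
    (((pr 2).hasFDerivAt.add (pr 3).hasFDerivAt).add (pr 4).hasFDerivAt).rpow_const (Or.inl h234)
  have hC : HasFDerivAt (fun x : Fin 6 → ℝ => x 5 ^ r)
      ((r * x 5 ^ (r - 1)) • pr 5) x := (pr 5).hasFDerivAt.rpow_const (Or.inl h5)
  have hD := (hA.mul hB).mul hC
  intro i
  rw [grad, (show HasFDerivAt (fun x : Fin 6 → ℝ => (x 0 + x 1) ^ p * (x 2 + x 3 + x 4) ^ q * x 5 ^ r) _ x from hD).fderiv]
  fin_cases i <;>
    · simp only [ContinuousLinearMap.add_apply, ContinuousLinearMap.smul_apply,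
        ContinuousLinearMap.proj_apply, smul_eq_mul, Pi.single_apply, pr]
      norm_num [Fin.ext_iff, show ((0:Fin 6).val)=0 from rfl, show ((1:Fin 6).val)=1 from rfl,
        show ((2:Fin 6).val)=2 from rfl, show ((3:Fin 6).val)=3 from rfl,
        show ((4:Fin 6).val)=4 from rfl, show ((5:Fin 6).val)=5 from rfl]
      try ring

lemma grad_F2 (p q r e : ℝ) (x : Fin 6 → ℝ) (h2 : x 2 ≠ 0) (h3 : x 3 ≠ 0) (h4 : x 4 ≠ 0)
    (h234 : x 2 + x 3 + x 4 ≠ 0) :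
    ∀ i, grad (fun x : Fin 6 → ℝ => x 2 ^ p * x 3 ^ q * x 4 ^ r * (x 2 + x 3 + x 4) ^ e) x i =
      (if i = 2 then p * x 2 ^ (p - 1) * x 3 ^ q * x 4 ^ r * (x 2 + x 3 + x 4) ^ e else 0)
      + (if i = 3 then q * x 2 ^ p * x 3 ^ (q - 1) * x 4 ^ r * (x 2 + x 3 + x 4) ^ e else 0)
      + (if i = 4 then r * x 2 ^ p * x 3 ^ q * x 4 ^ (r - 1) * (x 2 + x 3 + x 4) ^ e else 0)
      + (if i = 2 ∨ i = 3 ∨ i = 4 then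
          e * x 2 ^ p * x 3 ^ q * x 4 ^ r * (x 2 + x 3 + x 4) ^ (e - 1) else 0) := by
  have hA : HasFDerivAt (fun x : Fin 6 → ℝ => x 2 ^ p)
      ((p * x 2 ^ (p - 1)) • pr 2) x := (pr 2).hasFDerivAt.rpow_const (Or.inl h2)
  have hB : HasFDerivAt (fun x : Fin 6 → ℝ => x 3 ^ q)
      ((q * x 3 ^ (q - 1)) • pr 3) x := (pr 3).hasFDerivAt.rpow_const (Or.inl h3)
  have hC : HasFDerivAt (fun x : Fin 6 → ℝ => x 4 ^ r)
      ((r * x 4 ^ (r - 1)) • pr 4) x := (pr 4).hasFDerivAt.rpow_const (Or.inl h4)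
  have hE : HasFDerivAt (fun x : Fin 6 → ℝ => (x 2 + x 3 + x 4) ^ e)
      ((e * (x 2 + x 3 + x 4) ^ (e - 1)) • (pr 2 + pr 3 + pr 4)) x :=
    (((pr 2).hasFDerivAt.add (pr 3).hasFDerivAt).add (pr 4).hasFDerivAt).rpow_const (Or.inl h234)
  have hD := ((hA.mul hB).mul hC).mul hE
  intro i
  rw [grad, (show HasFDerivAt (fun x : Fin 6 → ℝ => x 2 ^ p * x 3 ^ q * x 4 ^ r * (x 2 + x 3 + x 4) ^ e) _ x from hD).fderiv]
  fin_cases i <;>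
    · simp only [ContinuousLinearMap.add_apply, ContinuousLinearMap.smul_apply,
        ContinuousLinearMap.proj_apply, smul_eq_mul, Pi.single_apply, pr]
      norm_num [Fin.ext_iff, show ((0:Fin 6).val)=0 from rfl, show ((1:Fin 6).val)=1 from rfl,
        show ((2:Fin 6).val)=2 from rfl, show ((3:Fin 6).val)=3 from rfl,
        show ((4:Fin 6).val)=4 from rfl, show ((5:Fin 6).val)=5 from rfl]
      try ring

/-- for the 6-dim LV system of type [1,1,0], the two given functions
are constants of motion and Poisson commute. -/
theorem stmt9 (a₁ a₂ a₃ a₄ a₅ b₁ c₁ : ℝ) :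
    let A : Matrix (Fin 6) (Fin 6) ℝ :=
      !![0, a₁, b₁, b₁, b₁, c₁;
         -a₁, 0, b₁, b₁, b₁, c₁;
         -b₁, -b₁, 0, a₂, a₃, a₅;
         -b₁, -b₁, -a₂, 0, a₄, a₅;
         -b₁, -b₁, -a₃, -a₄, 0, a₅;
         -c₁, -c₁, -a₅, -a₅, -a₅, 0]
    let F₁ : (Fin 6 → ℝ) → ℝ :=
      fun x => (x 0 + x 1) ^ a₅ * (x 2 + x 3 + x 4) ^ (-c₁) * x 5 ^ b₁
    let F₂ : (Fin 6 → ℝ) → ℝ :=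
      fun x => x 2 ^ (-a₄) * x 3 ^ a₃ * x 4 ^ (-a₂) * (x 2 + x 3 + x 4) ^ (a₂ - a₃ + a₄)
    ∀ x : Fin 6 → ℝ, (∀ i, 0 < x i) →
      lieDeriv F₁ (lvField A 0) x = 0 ∧
      lieDeriv F₂ (lvField A 0) x = 0 ∧
      pbracket A F₁ F₂ x = 0 := by
  intro A F₁ F₂ x hx
  have h0 := hx 0
  have h1 := hx 1
  have h2 := hx 2
  have h3 := hx 3
  have h4 := hx 4
  have h5 := hx 5
  have h01 : x 0 + x 1 ≠ 0 := by positivity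
  have h234 : x 2 + x 3 + x 4 ≠ 0 := by positivity
  have g1 := grad_F1 a₅ (-c₁) b₁ x h01 h234 h5.ne'
  have g2 := grad_F2 (-a₄) a₃ (-a₂) (a₂ - a₃ + a₄) x h2.ne' h3.ne' h4.ne' h234
  have E01 : (x 0 + x 1) ^ a₅ = (x 0 + x 1) ^ (a₅ - 1) * (x 0 + x 1) := by
    rw [Real.rpow_sub_one h01, div_mul_cancel₀ _ h01]
  have E234a : (x 2 + x 3 + x 4) ^ (-c₁) = (x 2 + x 3 + x 4) ^ (-c₁ - 1) * (x 2 + x 3 + x 4) := by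
    rw [Real.rpow_sub_one h234, div_mul_cancel₀ _ h234]
  have E234b : (x 2 + x 3 + x 4) ^ (a₂ - a₃ + a₄)
      = (x 2 + x 3 + x 4) ^ (a₂ - a₃ + a₄ - 1) * (x 2 + x 3 + x 4) := by
    rw [Real.rpow_sub_one h234, div_mul_cancel₀ _ h234]
  have E2 : x 2 ^ (-a₄) = x 2 ^ (-a₄ - 1) * x 2 := by
    rw [Real.rpow_sub_one h2.ne', div_mul_cancel₀ _ h2.ne']
  have E3 : x 3 ^ a₃ = x 3 ^ (a₃ - 1) * x 3 := by
    rw [Real.rpow_sub_one h3.ne', div_mul_cancel₀ _ h3.ne']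
  have E4 : x 4 ^ (-a₂) = x 4 ^ (-a₂ - 1) * x 4 := by
    rw [Real.rpow_sub_one h4.ne', div_mul_cancel₀ _ h4.ne']
  have E5 : x 5 ^ b₁ = x 5 ^ (b₁ - 1) * x 5 := by
    rw [Real.rpow_sub_one h5.ne', div_mul_cancel₀ _ h5.ne']
  refine ⟨?_, ?_, ?_⟩
  · simp only [lieDeriv, lvField, Fin.sum_univ_six, Pi.zero_apply, zero_add]
    simp only [F₁, g1]
    norm_num [Fin.ext_iff, show ((0:Fin 6).val)=0 from rfl, show ((1:Fin 6).val)=1 from rfl, show ((2:Fin 6).val)=2 from rfl, show ((3:Fin 6).val)=3 from rfl, show ((4:Fin 6).val)=4 from rfl, show ((5:Fin 6).val)=5 from rfl]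
    set y₀ := x 0 with hy₀
    set y₁ := x 1 with hy₁
    set y₂ := x 2 with hy₂
    set y₃ := x 3 with hy₃
    set y₄ := x 4 with hy₄
    set y₅ := x 5 with hy₅
    simp only [A, Matrix.of_apply, Matrix.cons_val_zero, Matrix.cons_val_succ,
      show (5:Fin 6) = (4:Fin 5).succ from rfl, show (4:Fin 5) = (3:Fin 4).succ from rfl,
      show (3:Fin 4) = (2:Fin 3).succ from rfl, show (2:Fin 3) = (1:Fin 2).succ from rfl,
      show (1:Fin 2) = (0:Fin 1).succ from rfl,
      show (4:Fin 6) = (3:Fin 5).succ from rfl, show (3:Fin 5) = (2:Fin 4).succ from rfl,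
      show (2:Fin 4) = (1:Fin 3).succ from rfl, show (1:Fin 3) = (0:Fin 2).succ from rfl,
      show (3:Fin 6) = (2:Fin 5).succ from rfl, show (2:Fin 5) = (1:Fin 4).succ from rfl,
      show (1:Fin 4) = (0:Fin 3).succ from rfl,
      show (2:Fin 6) = (1:Fin 5).succ from rfl, show (1:Fin 5) = (0:Fin 4).succ from rfl,
      show (1:Fin 6) = (0:Fin 5).succ from rfl]
    simp only [E01, E234a, E5]
    ring
  · simp only [lieDeriv, lvField, Fin.sum_univ_six, Pi.zero_apply, zero_add]
    simp only [F₂, g2]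
    norm_num [Fin.ext_iff, show ((0:Fin 6).val)=0 from rfl, show ((1:Fin 6).val)=1 from rfl, show ((2:Fin 6).val)=2 from rfl, show ((3:Fin 6).val)=3 from rfl, show ((4:Fin 6).val)=4 from rfl, show ((5:Fin 6).val)=5 from rfl]
    set y₀ := x 0 with hy₀
    set y₁ := x 1 with hy₁
    set y₂ := x 2 with hy₂
    set y₃ := x 3 with hy₃
    set y₄ := x 4 with hy₄
    set y₅ := x 5 with hy₅
    simp only [A, Matrix.of_apply, Matrix.cons_val_zero, Matrix.cons_val_succ,
      show (5:Fin 6) = (4:Fin 5).succ from rfl, show (4:Fin 5) = (3:Fin 4).succ from rfl,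
      show (3:Fin 4) = (2:Fin 3).succ from rfl, show (2:Fin 3) = (1:Fin 2).succ from rfl,
      show (1:Fin 2) = (0:Fin 1).succ from rfl,
      show (4:Fin 6) = (3:Fin 5).succ from rfl, show (3:Fin 5) = (2:Fin 4).succ from rfl,
      show (2:Fin 4) = (1:Fin 3).succ from rfl, show (1:Fin 3) = (0:Fin 2).succ from rfl,
      show (3:Fin 6) = (2:Fin 5).succ from rfl, show (2:Fin 5) = (1:Fin 4).succ from rfl,
      show (1:Fin 4) = (0:Fin 3).succ from rfl,
      show (2:Fin 6) = (1:Fin 5).succ from rfl, show (1:Fin 5) = (0:Fin 4).succ from rfl,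
      show (1:Fin 6) = (0:Fin 5).succ from rfl]
    simp only [E234b, E2, E3, E4]
    ring
  · simp only [pbracket, Fin.sum_univ_six]
    simp only [F₁, F₂, g1, g2]
    norm_num [Fin.ext_iff, show ((0:Fin 6).val)=0 from rfl, show ((1:Fin 6).val)=1 from rfl, show ((2:Fin 6).val)=2 from rfl, show ((3:Fin 6).val)=3 from rfl, show ((4:Fin 6).val)=4 from rfl, show ((5:Fin 6).val)=5 from rfl]
    set y₀ := x 0 with hy₀
    set y₁ := x 1 with hy₁
    set y₂ := x 2 with hy₂
    set y₃ := x 3 with hy₃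
    set y₄ := x 4 with hy₄
    set y₅ := x 5 with hy₅
    simp only [A, Matrix.of_apply, Matrix.cons_val_zero, Matrix.cons_val_succ,
      show (5:Fin 6) = (4:Fin 5).succ from rfl, show (4:Fin 5) = (3:Fin 4).succ from rfl,
      show (3:Fin 4) = (2:Fin 3).succ from rfl, show (2:Fin 3) = (1:Fin 2).succ from rfl,
      show (1:Fin 2) = (0:Fin 1).succ from rfl,
      show (4:Fin 6) = (3:Fin 5).succ from rfl, show (3:Fin 5) = (2:Fin 4).succ from rfl,
      show (2:Fin 4) = (1:Fin 3).succ from rfl, show (1:Fin 3) = (0:Fin 2).succ from rfl,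
      show (3:Fin 6) = (2:Fin 5).succ from rfl, show (2:Fin 5) = (1:Fin 4).succ from rfl,
      show (1:Fin 4) = (0:Fin 3).succ from rfl,
      show (2:Fin 6) = (1:Fin 5).succ from rfl, show (1:Fin 5) = (0:Fin 4).succ from rfl,
      show (1:Fin 6) = (0:Fin 5).succ from rfl]
    simp only [E01, E234a, E234b, E2, E3, E4, E5]
    ring
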